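/- Extremal bounds on iterated polar transforms for the BEC: let n ∈ ℕ, let b = (b₁,…,bₙ) ∈ {0,1}ⁿ have exactly m entries equal to 1, and let x ∈ [0,1]. Then 1 − (1 − x^{2^m})^{2^{n−m}} ≤ (f_{b₁} ∘ f_{b₂} ∘ ⋯ ∘ f_{bₙ})(x) ≤ (1 − (1 − x)^{2^{n−m}})^{2^m}. -/

import Mathlib

/-- The polar transform maps for the BEC: a '1' step squares the erasure
probability, a '0' step maps x to 1 - (1 - x)². -/
noncomputable def polarStep : Bool → ℝ → ℝ
  | true, x => x ^ 2
  | false, x => 1 - (1 - x) ^ 2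

/-- Iterated polar transform along the binary word `b = (b₁, …, bₙ)`:
`polarIter [b₁, …, bₙ] x = (f_{b₁} ∘ f_{b₂} ∘ ⋯ ∘ f_{bₙ}) x`. -/
noncomputable def polarIter : List Bool → ℝ → ℝ
  | [], x => x
  | b :: bs, x => polarStep b (polarIter bs x)

lemma key (u : ℝ) (hu0 : 0 ≤ u) (hu1 : u ≤ 1) (K : ℕ) :
    2 ≤ u ^ K + (2 - u) ^ K := by
  have h1 : 1 + (K : ℝ) * (-(1 - u)) ≤ (1 + (-(1 - u))) ^ K :=
    one_add_mul_le_pow (by linarith) K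
  have h2 : 1 + (K : ℝ) * (1 - u) ≤ (1 + (1 - u)) ^ K :=
    one_add_mul_le_pow (by linarith) K
  have e1 : (1 + (-(1 - u))) = u := by ring
  have e2 : (1 + (1 - u)) = 2 - u := by ring
  rw [e1] at h1; rw [e2] at h2
  linarith

lemma polarIter_mem (b : List Bool) (x : ℝ) (hx0 : 0 ≤ x) (hx1 : x ≤ 1) :
    0 ≤ polarIter b x ∧ polarIter b x ≤ 1 := by
  induction b with
  | nil => exact ⟨hx0, hx1⟩
  | cons c bs ih =>
    obtain ⟨h0, h1⟩ := ih
    cases c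
    · simp only [polarIter, polarStep]
      constructor <;> nlinarith
    · simp only [polarIter, polarStep]
      constructor <;> nlinarith

lemma polarIter_aux (b : List Bool) (x : ℝ) (hx0 : 0 ≤ x) (hx1 : x ≤ 1) :
    1 - (1 - x ^ (2 ^ b.count true)) ^ (2 ^ (b.length - b.count true)) ≤ polarIter b x ∧
      polarIter b x ≤ (1 - (1 - x) ^ (2 ^ (b.length - b.count true))) ^ (2 ^ b.count true) := by
  induction b with
  | nil => simp [polarIter]
  | cons c bs ih =>
    obtain ⟨hL, hU⟩ := ih
    obtain ⟨hy0, hy1⟩ := polarIter_mem bs x hx0 hx1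
    set y := polarIter bs x with hy
    set m := bs.count true with hmdef
    set k := bs.length - m with hkdef
    have hmlen : m ≤ bs.length := List.count_le_length
    cases c
    · -- false case
      have hcount : (false :: bs).count true = m := by simp [hmdef]
      have hlen : (false :: bs).length - m = k + 1 := by
        simp only [List.length_cons, hkdef]; omega
      rw [hcount, hlen]
      have hstep : polarIter (false :: bs) x = 1 - (1 - y) ^ 2 := rfl
      rw [hstep]
      set a : ℝ := 1 - (1 - x) ^ (2 ^ k) with hadef
      have hxk0 : 0 ≤ (1 - x) ^ (2 ^ k) := pow_nonneg (by linarith) _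
      have hxk1 : (1 - x) ^ (2 ^ k) ≤ 1 := pow_le_one₀ (by linarith) (by linarith)
      have ha0 : 0 ≤ a := by simp [hadef]; linarith
      have ha1 : a ≤ 1 := by simp [hadef]; linarith
      constructor
      · -- lower bound
        set L : ℝ := 1 - (1 - x ^ (2 ^ m)) ^ (2 ^ k) with hLdef
        have hLy : L ≤ y := hL
        have hxm0 : 0 ≤ x ^ (2 ^ m) := pow_nonneg hx0 _
        have hxm1 : x ^ (2 ^ m) ≤ 1 := pow_le_one₀ hx0 hx1
        have hq0 : 0 ≤ (1 - x ^ (2 ^ m)) ^ (2 ^ k) := pow_nonneg (by linarith) _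
        have hq1 : (1 - x ^ (2 ^ m)) ^ (2 ^ k) ≤ 1 := pow_le_one₀ (by linarith) (by linarith)
        have hsq : (1 - y) ^ 2 ≤ (1 - L) ^ 2 := by nlinarith
        have hexp : (1 - x ^ (2 ^ m)) ^ (2 ^ (k + 1)) = ((1 - x ^ (2 ^ m)) ^ (2 ^ k)) ^ 2 := by
          rw [← pow_mul, pow_succ]
        have h1L : (1 - L) = (1 - x ^ (2 ^ m)) ^ (2 ^ k) := by rw [hLdef]; ring
        rw [hexp, ← h1L]
        linarith
      · -- upper bound
        have hyam : y ≤ a ^ (2 ^ m) := hU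
        have ham0 : 0 ≤ a ^ (2 ^ m) := pow_nonneg ha0 _
        have ham1 : a ^ (2 ^ m) ≤ 1 := pow_le_one₀ ha0 ha1
        have hmono : 1 - (1 - y) ^ 2 ≤ 1 - (1 - a ^ (2 ^ m)) ^ 2 := by nlinarith
        have hkey := key a ha0 ha1 (2 ^ m)
        have hstep2 : 1 - (1 - a ^ (2 ^ m)) ^ 2 ≤ (1 - (1 - a) ^ 2) ^ (2 ^ m) := by
          have h1 : (1 - (1 - a) ^ 2) ^ (2 ^ m) = a ^ (2 ^ m) * (2 - a) ^ (2 ^ m) := by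
            rw [← mul_pow]; ring_nf
          nlinarith
        have hexp : (1 - (1 - x) ^ (2 ^ (k + 1))) = 1 - (1 - a) ^ 2 := by
          rw [hadef]
          rw [show (1 - (1 - (1 - x) ^ 2 ^ k)) = (1 - x) ^ 2 ^ k by ring, ← pow_mul, pow_succ]
        rw [hexp]
        linarith
    · -- true case
      have hcount : (true :: bs).count true = m + 1 := by simp [hmdef]
      have hlen : (true :: bs).length - (m + 1) = k := by
        simp only [List.length_cons, hkdef]; omega
      rw [hcount, hlen]
      have hstep : polarIter (true :: bs) x = y ^ 2 := rfl
      rw [hstep]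
      set a : ℝ := x ^ (2 ^ m) with hadef
      have ha0 : 0 ≤ a := pow_nonneg hx0 _
      have ha1 : a ≤ 1 := pow_le_one₀ hx0 hx1
      have hasq : a ^ 2 = x ^ (2 ^ (m + 1)) := by rw [hadef, ← pow_mul, pow_succ]
      constructor
      · -- lower bound
        set L : ℝ := 1 - (1 - a) ^ (2 ^ k) with hLdef
        have hq0 : 0 ≤ (1 - a) ^ (2 ^ k) := pow_nonneg (by linarith) _
        have hq1 : (1 - a) ^ (2 ^ k) ≤ 1 := pow_le_one₀ (by linarith) (by linarith)
        have hL0 : 0 ≤ L := by rw [hLdef]; linarith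
        have hLy : L ≤ y := hL
        have hsqle : L ^ 2 ≤ y ^ 2 := by nlinarith
        have hkey := key (1 - a) (by linarith) (by linarith) (2 ^ k)
        have hgoal : 1 - (1 - a ^ 2) ^ (2 ^ k) ≤ L ^ 2 := by
          have h1 : (1 - a ^ 2) ^ (2 ^ k) = (1 - a) ^ (2 ^ k) * (2 - (1 - a)) ^ (2 ^ k) := by
            rw [← mul_pow]; ring_nf
          nlinarith
        rw [← hasq]
        linarith
      · -- upper bound
        have hU' : y ≤ (1 - (1 - x) ^ (2 ^ k)) ^ (2 ^ m) := hU
        have hexp : ((1 - (1 - x) ^ (2 ^ k)) ^ (2 ^ m)) ^ 2 = (1 - (1 - x) ^ (2 ^ k)) ^ (2 ^ (m + 1)) := by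
          rw [← pow_mul, pow_succ]
        calc y ^ 2 ≤ ((1 - (1 - x) ^ (2 ^ k)) ^ (2 ^ m)) ^ 2 := by
              apply pow_le_pow_left₀ hy0 hU'
          _ = _ := hexp

/-- Extremal bounds on iterated polar transforms for the BEC. -/
theorem polarIter_bounds (b : List Bool) (x : ℝ) (hx0 : 0 ≤ x) (hx1 : x ≤ 1)
    (n m : ℕ) (hn : n = b.length) (hm : m = b.count true) :
    1 - (1 - x ^ (2 ^ m)) ^ (2 ^ (n - m)) ≤ polarIter b x ∧
      polarIter b x ≤ (1 - (1 - x) ^ (2 ^ (n - m))) ^ (2 ^ m) := by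
  subst hn hm
  exact polarIter_aux b x hx0 hx1
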